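/- Let (χ,ρ) be a complete separable metric space and let P be a Markov transition kernel on χ admitting a density p with respect to a σ-finite measure λ, i.e. P(x,dz) = p(x,z) λ(dz) with p jointly measurable. Let π be a probability measure that is stationary for P (πP = π) and let μ be an arbitrary probability measure on χ. If there is a constant A ≥ 0 such that ∫_χ |p(x,z) − p(y,z)| λ(dz) ≤ A ρ(x,y) for all x, y ∈ χ, then for every n ≥ 1, d_TV(μP^n, π) ≤ (A/2) · d_W(μP^{n−1}, π). -/

import Mathlib

open MeasureTheory ProbabilityTheory
open scoped ENNReal

/-- Total variation distance between two measures: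
the supremum over measurable sets `A` of `|μ A - ν A|`. -/
noncomputable def tvDist {χ : Type*} [MeasurableSpace χ] (μ ν : Measure χ) : ℝ :=
  ⨆ A : {s : Set χ // MeasurableSet s}, |(μ A.1).toReal - (ν A.1).toReal|

/-- Wasserstein distance: the infimum over couplings `M` of `μ` and `ν`
of the expected distance `∫ ρ(x,y) M(dx,dy)`. -/
noncomputable def wassersteinDist {χ : Type*} [MeasurableSpace χ] [PseudoEMetricSpace χ]
    (μ ν : Measure χ) : ℝ≥0∞ :=
  ⨅ (M : Measure (χ × χ)) (_ : M.map Prod.fst = μ ∧ M.map Prod.snd = ν),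
    ∫⁻ q, edist q.1 q.2 ∂M

/-- `iterateKernel P μ n` is the distribution `μ Pⁿ` of a Markov chain with
transition kernel `P` and initial distribution `μ` after `n` steps. -/
noncomputable def iterateKernel {χ : Type*} [MeasurableSpace χ]
    (P : χ → Measure χ) (μ : Measure χ) : ℕ → Measure χ
  | 0 => μ
  | n + 1 => (iterateKernel P μ n).bind P

/-- If two integrable functions have the same total integral, the difference of their
integrals over a set is at most half the `L¹` distance. -/
lemma half_bound {χ : Type*} [MeasurableSpace χ] (lam : Measure χ)
    {g₁ g₂ : χ → ℝ} (h₁ : Integrable g₁ lam) (h₂ : Integrable g₂ lam)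
    (heq : ∫ z, g₁ z ∂lam = ∫ z, g₂ z ∂lam) {A : Set χ} (hA : MeasurableSet A) :
    |(∫ z in A, g₁ z ∂lam) - ∫ z in A, g₂ z ∂lam| ≤ (∫ z, |g₁ z - g₂ z| ∂lam) / 2 := by
  have hd : Integrable (fun z => g₁ z - g₂ z) lam := h₁.sub h₂
  have hsum : (∫ z in A, (g₁ z - g₂ z) ∂lam) + ∫ z in Aᶜ, (g₁ z - g₂ z) ∂lam = 0 := by
    rw [integral_add_compl hA hd, integral_sub h₁ h₂, heq]; ring
  have e1 : ∫ z in A, (g₁ z - g₂ z) ∂lam = (∫ z in A, g₁ z ∂lam) - ∫ z in A, g₂ z ∂lam :=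
    integral_sub h₁.restrict h₂.restrict
  have habs : (∫ z in A, |g₁ z - g₂ z| ∂lam) + ∫ z in Aᶜ, |g₁ z - g₂ z| ∂lam
      = ∫ z, |g₁ z - g₂ z| ∂lam := integral_add_compl hA hd.abs
  have b1 : |∫ z in A, (g₁ z - g₂ z) ∂lam| ≤ ∫ z in A, |g₁ z - g₂ z| ∂lam := by
    simpa [Real.norm_eq_abs] using
      norm_integral_le_integral_norm (μ := lam.restrict A) (f := fun z => g₁ z - g₂ z)
  have b2 : |∫ z in Aᶜ, (g₁ z - g₂ z) ∂lam| ≤ ∫ z in Aᶜ, |g₁ z - g₂ z| ∂lam := by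
    simpa [Real.norm_eq_abs] using
      norm_integral_le_integral_norm (μ := lam.restrict Aᶜ) (f := fun z => g₁ z - g₂ z)
  have hopp : |∫ z in A, (g₁ z - g₂ z) ∂lam| = |∫ z in Aᶜ, (g₁ z - g₂ z) ∂lam| := by
    have : ∫ z in A, (g₁ z - g₂ z) ∂lam = -(∫ z in Aᶜ, (g₁ z - g₂ z) ∂lam) := by linarith
    rw [this, abs_neg]
  rw [← e1]
  have h3 := abs_nonneg (∫ z in A, (g₁ z - g₂ z) ∂lam)
  linarith [hopp ▸ b2]

/-- If the transition densities satisfy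
`∫ |p(x,z) − p(y,z)| λ(dz) ≤ A ρ(x,y)`, then
`d_TV(μPⁿ, π) ≤ (A/2) d_W(μPⁿ⁻¹, π)` for all `n ≥ 1`. -/
theorem stmt0 {χ : Type*} [MeasurableSpace χ] [MetricSpace χ] [BorelSpace χ]
    [CompleteSpace χ] [TopologicalSpace.SeparableSpace χ]
    (lam : Measure χ) [SigmaFinite lam]
    (p : χ → χ → ℝ) (hp : Measurable (Function.uncurry p))
    (P : χ → Measure χ)
    (hP : ∀ x, P x = lam.withDensity (fun z => ENNReal.ofReal (p x z)))
    (hMarkov : ∀ x, IsProbabilityMeasure (P x))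
    (π μ : Measure χ) [IsProbabilityMeasure π] [IsProbabilityMeasure μ]
    (hstat : π.bind P = π)
    (A : ℝ) (hA : 0 ≤ A)
    (hLip : ∀ x y, ∫⁻ z, ENNReal.ofReal |p x z - p y z| ∂lam
      ≤ ENNReal.ofReal (A * dist x y))
    (n : ℕ) (hn : 1 ≤ n) :
    ENNReal.ofReal (tvDist (iterateKernel P μ n) π)
      ≤ ENNReal.ofReal (A / 2) * wassersteinDist (iterateKernel P μ (n - 1)) π := by
  classical
  haveI : SecondCountableTopology χ := UniformSpace.secondCountable_of_separable χ
  -- measurability of densities and of the kernel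
  have hpm : ∀ x, Measurable fun z => ENNReal.ofReal (p x z) := fun x =>
    (hp.comp measurable_prodMk_left).ennreal_ofReal
  have hPmeasSet : ∀ {s : Set χ}, MeasurableSet s → Measurable fun x => P x s := by
    intro s hs
    have heq : (fun x => P x s) = fun x => ∫⁻ z in s, ENNReal.ofReal (p x z) ∂lam := by
      funext x; rw [hP x, withDensity_apply _ hs]
    rw [heq]
    exact Measurable.lintegral_prod_right' (f := fun q : χ × χ => ENNReal.ofReal (p q.1 q.2))
      hp.ennreal_ofReal
  have hPmeas : Measurable P :=
    Measure.measurable_of_measurable_coe P fun s hs => hPmeasSet hs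
  -- probability measures along the iteration
  have hiter : ∀ m, IsProbabilityMeasure (iterateKernel P μ m) := by
    intro m
    induction m with
    | zero => simpa [iterateKernel] using inferInstanceAs (IsProbabilityMeasure μ)
    | succ k ih =>
      constructor
      rw [iterateKernel, Measure.bind_apply MeasurableSet.univ hPmeas.aemeasurable]
      have : ∀ x, P x Set.univ = 1 := fun x => (hMarkov x).measure_univ
      simp only [this, lintegral_one]
      exact ih.measure_univ
  -- total density integral is 1
  have htot : ∀ x, ∫⁻ z, ENNReal.ofReal (p x z) ∂lam = 1 := by
    intro x
    have h1 : P x Set.univ = 1 := (hMarkov x).measure_univ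
    rw [hP x, withDensity_apply _ MeasurableSet.univ, Measure.restrict_univ] at h1
    exact h1
  -- the g functions : nonnegative parts of the densities
  set g : χ → χ → ℝ := fun x z => (ENNReal.ofReal (p x z)).toReal with hg
  have hgmeas : ∀ x, Measurable (g x) := fun x => (hpm x).ennreal_toReal
  have hgint : ∀ x, Integrable (g x) lam := fun x =>
    integrable_toReal_of_lintegral_ne_top (hpm x).aemeasurable (by rw [htot x]; exact ENNReal.one_ne_top)
  have hgtot : ∀ x, ∫ z, g x z ∂lam = 1 := by
    intro x
    have := integral_toReal (μ := lam) (hpm x).aemeasurable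
      (Filter.Eventually.of_forall fun z => ENNReal.ofReal_lt_top)
    rw [hg]; rw [this, htot x]; simp
  -- the test functions f
  set f : Set χ → χ → ℝ := fun s x => (P x s).toReal with hf
  have hfmeas : ∀ {s : Set χ}, MeasurableSet s → Measurable (f s) := fun hs =>
    (hPmeasSet hs).ennreal_toReal
  have hfbd : ∀ s x, |f s x| ≤ 1 := by
    intro s x
    have h0 : (0:ℝ) ≤ f s x := ENNReal.toReal_nonneg
    have h1 : P x s ≤ 1 := prob_le_one
    have := ENNReal.toReal_mono ENNReal.one_ne_top h1
    simp only [ENNReal.toReal_one] at this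
    rw [abs_of_nonneg h0]; exact this
  have hfA : ∀ {s : Set χ}, MeasurableSet s → ∀ x, f s x = ∫ z in s, g x z ∂lam := by
    intro s hs x
    have hrw : P x s = ∫⁻ z in s, ENNReal.ofReal (p x z) ∂lam := by
      rw [hP x, withDensity_apply _ hs]
    rw [hf]
    simp only
    rw [hrw, integral_toReal ((hpm x).aemeasurable.restrict)
      (Filter.Eventually.of_forall fun z => ENNReal.ofReal_lt_top)]
  -- Lipschitz bound on f
  have hflip : ∀ {s : Set χ}, MeasurableSet s → ∀ x y,
      |f s x - f s y| ≤ A / 2 * dist x y := by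
    intro s hs x y
    have h1 : |f s x - f s y| ≤ (∫ z, |g x z - g y z| ∂lam) / 2 := by
      rw [hfA hs x, hfA hs y]
      exact half_bound lam (hgint x) (hgint y) (by rw [hgtot x, hgtot y]) hs
    have h2 : ∫ z, |g x z - g y z| ∂lam ≤ A * dist x y := by
      have hint : Integrable (fun z => |g x z - g y z|) lam := ((hgint x).sub (hgint y)).abs
      have hofr : ENNReal.ofReal (∫ z, |g x z - g y z| ∂lam)
          = ∫⁻ z, ENNReal.ofReal |g x z - g y z| ∂lam :=
        ofReal_integral_eq_lintegral_ofReal hint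
          (Filter.Eventually.of_forall fun z => abs_nonneg _)
      have hmono : ∫⁻ z, ENNReal.ofReal |g x z - g y z| ∂lam
          ≤ ∫⁻ z, ENNReal.ofReal |p x z - p y z| ∂lam := by
        refine lintegral_mono fun z => ENNReal.ofReal_le_ofReal ?_
        have : g x z = max (p x z) 0 := ENNReal.toReal_ofReal'
        have h' : g y z = max (p y z) 0 := ENNReal.toReal_ofReal'
        rw [this, h']
        exact abs_max_sub_max_le_abs _ _ _
      have := (hofr ▸ (hmono.trans (hLip x y)))
      rwa [ENNReal.ofReal_le_ofReal_iff (by positivity)] at this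
    linarith
  -- set up n = m + 1
  obtain ⟨m, rfl⟩ : ∃ m, n = m + 1 := ⟨n - 1, by omega⟩
  simp only [Nat.add_sub_cancel]
  set ν := iterateKernel P μ m with hν
  haveI : IsProbabilityMeasure ν := hiter m
  -- representation of the measures via f
  have hμn : ∀ {s : Set χ}, MeasurableSet s →
      ((iterateKernel P μ (m + 1)) s).toReal = ∫ x, f s x ∂ν := by
    intro s hs
    have hb : (iterateKernel P μ (m + 1)) s = ∫⁻ x, P x s ∂ν := by
      rw [iterateKernel, Measure.bind_apply hs hPmeas.aemeasurable]
    rw [hb, integral_toReal ((hPmeasSet hs).aemeasurable)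
      (Filter.Eventually.of_forall fun x => measure_lt_top (P x) s)]
  have hπn : ∀ {s : Set χ}, MeasurableSet s →
      (π s).toReal = ∫ x, f s x ∂π := by
    intro s hs
    have hb : π s = ∫⁻ x, P x s ∂π := by
      conv_lhs => rw [← hstat]
      rw [Measure.bind_apply hs hPmeas.aemeasurable]
    rw [hb, integral_toReal ((hPmeasSet hs).aemeasurable)
      (Filter.Eventually.of_forall fun x => measure_lt_top (P x) s)]
  -- case A = 0 : the measures coincide on every set
  rcases eq_or_lt_of_le hA with hA0 | hApos
  · -- A = 0, so f s is constant and tvDist = 0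
    have htv : ENNReal.ofReal (tvDist (iterateKernel P μ (m + 1)) π) = 0 := by
      rw [ENNReal.ofReal_eq_zero]
      refine Real.iSup_le (fun s => ?_) le_rfl
      rcases isEmpty_or_nonempty χ with hemp | hne
      · exfalso
        have h1 : π Set.univ = 1 := measure_univ
        rw [Set.univ_eq_empty_iff.2 hemp] at h1
        simp at h1
      · obtain ⟨x₀⟩ := hne
        have hconst : f s.1 = fun _ => f s.1 x₀ := by
          funext x
          have h0 := hflip s.2 x x₀
          rw [← hA0] at h0
          simp only [zero_div, zero_mul] at h0
          exact sub_eq_zero.1 (abs_nonpos_iff.1 h0)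
        rw [hμn s.2, hπn s.2, hconst]
        simp
    rw [htv]
    exact zero_le
  -- case A > 0
  have hc0 : ENNReal.ofReal (A / 2) ≠ 0 := by
    simp only [ne_eq, ENNReal.ofReal_eq_zero, not_le]; positivity
  have hct : ENNReal.ofReal (A / 2) ≠ ∞ := ENNReal.ofReal_ne_top
  rw [mul_comm, ← ENNReal.div_le_iff_le_mul (Or.inl hc0) (Or.inl hct)]
  rw [wassersteinDist]
  refine le_iInf fun M => le_iInf fun hM => ?_
  rw [ENNReal.div_le_iff_le_mul (Or.inl hc0) (Or.inl hct), mul_comm]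
  set L : ℝ≥0∞ := ∫⁻ q, edist q.1 q.2 ∂M with hL
  rcases eq_or_ne L ∞ with hLtop | hLfin
  · rw [hLtop, ENNReal.mul_top hc0]
    exact le_top
  -- L finite : main estimate
  haveI hMprob : IsProbabilityMeasure M := by
    constructor
    have h1 : (M.map Prod.fst) Set.univ = 1 := by rw [hM.1]; exact measure_univ
    rwa [Measure.map_apply measurable_fst MeasurableSet.univ, Set.preimage_univ] at h1
  have hdistmeas : Measurable fun q : χ × χ => dist q.1 q.2 :=
    (continuous_fst.dist continuous_snd).measurable
  have hdistint : Integrable (fun q : χ × χ => dist q.1 q.2) M := by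
    refine ⟨hdistmeas.aestronglyMeasurable, ?_⟩
    rw [hasFiniteIntegral_iff_ofReal (Filter.Eventually.of_forall fun q => dist_nonneg)]
    have : ∀ q : χ × χ, ENNReal.ofReal (dist q.1 q.2) = edist q.1 q.2 := fun q =>
      (edist_dist q.1 q.2).symm
    simp_rw [this]
    exact lt_of_le_of_ne le_top hLfin
  have hdistval : ∫ q, dist q.1 q.2 ∂M = L.toReal := by
    have hofr : ENNReal.ofReal (∫ q, dist q.1 q.2 ∂M) = L := by
      rw [ofReal_integral_eq_lintegral_ofReal hdistint
        (Filter.Eventually.of_forall fun q => dist_nonneg), hL]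
      congr 1
      funext q
      exact (edist_dist q.1 q.2).symm
    rw [← hofr, ENNReal.toReal_ofReal (integral_nonneg fun q => dist_nonneg)]
  -- per-set bound
  have hsetbd : ∀ s : {s : Set χ // MeasurableSet s},
      |((iterateKernel P μ (m + 1)) s.1).toReal - (π s.1).toReal|
        ≤ A / 2 * L.toReal := by
    rintro ⟨s, hs⟩
    simp only
    rw [hμn hs, hπn hs]
    -- transfer integrals to the coupling M
    have hint1 : ∫ x, f s x ∂ν = ∫ q : χ × χ, f s q.1 ∂M := by
      rw [← hM.1, integral_map measurable_fst.aemeasurable (hfmeas hs).aestronglyMeasurable]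
    have hint2 : ∫ x, f s x ∂π = ∫ q : χ × χ, f s q.2 ∂M := by
      rw [← hM.2, integral_map measurable_snd.aemeasurable (hfmeas hs).aestronglyMeasurable]
    have hi1 : Integrable (fun q : χ × χ => f s q.1) M :=
      (integrable_const (1:ℝ)).mono'
        ((hfmeas hs).comp measurable_fst).aestronglyMeasurable
        (Filter.Eventually.of_forall fun q => by
          simpa [Real.norm_eq_abs] using hfbd s q.1)
    have hi2 : Integrable (fun q : χ × χ => f s q.2) M :=
      (integrable_const (1:ℝ)).mono'
        ((hfmeas hs).comp measurable_snd).aestronglyMeasurable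
        (Filter.Eventually.of_forall fun q => by
          simpa [Real.norm_eq_abs] using hfbd s q.2)
    rw [hint1, hint2, ← integral_sub hi1 hi2]
    have habs : |∫ q : χ × χ, (f s q.1 - f s q.2) ∂M|
        ≤ ∫ q : χ × χ, |f s q.1 - f s q.2| ∂M := by
      simpa [Real.norm_eq_abs] using
        norm_integral_le_integral_norm (μ := M) (f := fun q : χ × χ => f s q.1 - f s q.2)
    refine habs.trans ?_
    have hintd : Integrable (fun q : χ × χ => A / 2 * dist q.1 q.2) M :=
      hdistint.const_mul _
    have hmono : ∫ q : χ × χ, |f s q.1 - f s q.2| ∂M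
        ≤ ∫ q : χ × χ, A / 2 * dist q.1 q.2 ∂M := by
      refine integral_mono (hi1.sub hi2).abs hintd fun q => ?_
      exact hflip hs q.1 q.2
    refine hmono.trans ?_
    rw [integral_const_mul, hdistval]
  -- conclude
  have htvle : tvDist (iterateKernel P μ (m + 1)) π ≤ A / 2 * L.toReal := by
    refine Real.iSup_le hsetbd ?_
    have : (0:ℝ) ≤ L.toReal := ENNReal.toReal_nonneg
    positivity
  calc ENNReal.ofReal (tvDist (iterateKernel P μ (m + 1)) π)
      ≤ ENNReal.ofReal (A / 2 * L.toReal) := ENNReal.ofReal_le_ofReal htvle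
    _ = ENNReal.ofReal (A / 2) * ENNReal.ofReal L.toReal := by
        rw [ENNReal.ofReal_mul (by positivity)]
    _ = ENNReal.ofReal (A / 2) * L := by rw [ENNReal.ofReal_toReal hLfin]
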